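/- Let f satisfy hypothesis (⋆) with parameters H, c, s, let a be a filter of order K with K > H, let u, v ≥ 1 be integers, and let p ∈ ℤ be fixed. Then N^{2H} Γ_{N,a}^{u,v}(p) → c ∫_ℝ e^{−ipξ} h_a^{u,v}(ξ) |ξ|^{−2H−1} dξ as N → ∞. -/

import Mathlib

open MeasureTheory Filter Complex

noncomputable section

/-- The polynomial `P_a(x) = ∑_{k=0}^l a_k x^k` associated to a filter. -/
def Pa (a : ℕ → ℝ) (l : ℕ) (x : ℂ) : ℂ :=
  ∑ k ∈ Finset.range (l + 1), (a k : ℂ) * x ^ k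

/-- `a` is a filter of order `K ≥ 1` and length `l+1`. -/
def IsFilter (a : ℕ → ℝ) (l K : ℕ) : Prop :=
  1 ≤ K ∧ K ≤ l ∧
    (∀ r < K, ∑ k ∈ Finset.range (l + 1), a k * (k : ℝ) ^ r = 0) ∧
    ∑ k ∈ Finset.range (l + 1), a k * (k : ℝ) ^ K ≠ 0

/-- Hypothesis (⋆) on the spectral density `f` with parameters `H, c, s`. -/
structure SpecHyp (f : ℝ → ℝ) (H c s : ℝ) : Prop where
  even : ∀ ξ : ℝ, f (-ξ) = f ξ
  nonneg : ∀ ξ : ℝ, 0 ≤ f ξ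
  meas : Measurable f
  integrable : Integrable (fun ξ : ℝ => min 1 (ξ ^ 2) * f ξ)
  Hpos : 0 < H
  cpos : 0 < c
  spos : 0 < s
  bound : ∃ C₀ > (0 : ℝ), ∃ A > (0 : ℝ), ∀ ξ : ℝ, A ≤ |ξ| →
    |f ξ - c * |ξ| ^ (-2 * H - 1)| ≤ C₀ * |ξ| ^ (-2 * H - 1 - s)

/-- `h_a^{u,v}(ξ) = P_a(e^{-iuξ}) conj(P_a(e^{-ivξ}))`. -/
def haUV (a : ℕ → ℝ) (l u v : ℕ) (ξ : ℝ) : ℂ :=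
  Pa a l (Complex.exp (-Complex.I * u * ξ)) *
    (starRingEnd ℂ) (Pa a l (Complex.exp (-Complex.I * v * ξ)))

/-- `Γ_{N,a}^{u,v}(p) = ∫ e^{-ipξ/N} h_a^{u,v}(ξ/N) f(ξ) dξ` (a real number). -/
def Gam (f : ℝ → ℝ) (a : ℕ → ℝ) (l u v N : ℕ) (p : ℤ) : ℝ :=
  (∫ ξ : ℝ, Complex.exp (-Complex.I * p * ξ / N) * haUV a l u v (ξ / N) * (f ξ : ℂ)).re

/-- The real number `∫ e^{-ipξ} h_a^{u,v}(ξ) |ξ|^{-2H-1} dξ`. -/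
def Iuv (a : ℕ → ℝ) (l u v : ℕ) (H : ℝ) (p : ℤ) : ℝ :=
  (∫ ξ : ℝ, Complex.exp (-Complex.I * p * ξ) * haUV a l u v ξ *
    ((|ξ| ^ (-2 * H - 1) : ℝ) : ℂ)).re

/-- Key Taylor bound: `‖e^{iy} - ∑_{r<n} (iy)^r/r!‖ ≤ |y|^n`. -/
lemma exp_taylor_bound : ∀ (n : ℕ) (y : ℝ),
    ‖Complex.exp (Complex.I * y) - ∑ r ∈ Finset.range n, (Complex.I * y) ^ r / r.factorial‖
      ≤ |y| ^ n := by
  have key : ∀ (n : ℕ) (y : ℝ),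
      Complex.exp (Complex.I * y) - ∑ r ∈ Finset.range (n+1), (Complex.I * y) ^ r / r.factorial
        = Complex.I * ∫ t in (0:ℝ)..y,
            (Complex.exp (Complex.I * t) - ∑ r ∈ Finset.range n, (Complex.I * t) ^ r / r.factorial) := by
    intro n y
    have h1 : (∫ t in (0:ℝ)..y, Complex.exp (Complex.I * t))
        = (Complex.exp (Complex.I * y) - 1) / Complex.I := by
      simpa using integral_exp_mul_complex (a := 0) (b := y) (c := Complex.I) I_ne_zero
    have h2 : ∀ r : ℕ, (∫ t in (0:ℝ)..y, (Complex.I * t) ^ r / r.factorial)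
        = Complex.I ^ r * ((y ^ (r+1) / (r+1).factorial : ℝ) : ℂ) := by
      intro r
      have he : (fun t : ℝ => (Complex.I * t) ^ r / r.factorial)
          = fun t : ℝ => (Complex.I ^ r / r.factorial) * ((t ^ r : ℝ) : ℂ) := by
        funext t; push_cast; ring
      rw [he, intervalIntegral.integral_const_mul, intervalIntegral.integral_ofReal,
        integral_pow]
      have hr : ((r:ℂ)+1) ≠ 0 := by
        have := Nat.cast_add_one_ne_zero (R := ℂ) r
        push_cast at this; exact this
      have hfac : ((r.factorial : ℂ)) ≠ 0 := by exact_mod_cast r.factorial_ne_zero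
      push_cast [Nat.factorial_succ]
      field_simp
      try ring
      try simp
    rw [intervalIntegral.integral_sub (by
          apply Continuous.intervalIntegrable; fun_prop)
        (by apply Continuous.intervalIntegrable; fun_prop),
      intervalIntegral.integral_finset_sum (fun r _ => by
        apply Continuous.intervalIntegrable; fun_prop),
      h1]
    have h3 : ∀ r ∈ Finset.range n,
        Complex.I * (Complex.I ^ r * ((y ^ (r+1) / (r+1).factorial : ℝ) : ℂ))
          = (Complex.I * y) ^ (r+1) / (r+1).factorial := by
      intro r _
      push_cast
      rw [mul_pow]
      ring
    rw [mul_sub, Finset.mul_sum, mul_div_cancel₀ _ I_ne_zero]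
    simp_rw [h2]
    rw [Finset.sum_congr rfl h3, Finset.sum_range_succ'
      (fun r => (Complex.I * (y:ℂ)) ^ r / r.factorial) n]
    simp
    ring
  intro n
  induction n with
  | zero => intro y; simp [Complex.norm_exp]
  | succ n ih =>
    intro y
    rw [key n y]
    have hb : ∀ t ∈ Set.uIoc (0:ℝ) y,
        ‖Complex.exp (Complex.I * t) - ∑ r ∈ Finset.range n, (Complex.I * t) ^ r / r.factorial‖
          ≤ |y| ^ n := by
      intro t ht
      refine le_trans (ih t) ?_
      have ht' : t ∈ Set.uIcc (0:ℝ) y := Set.uIoc_subset_uIcc ht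
      rw [Set.mem_uIcc] at ht'
      have : |t| ≤ |y| := by
        rcases ht' with ⟨h1, h2⟩ | ⟨h1, h2⟩
        · simpa using abs_le_max_abs_abs h1 h2
        · simpa [max_comm] using abs_le_max_abs_abs h1 h2
      exact pow_le_pow_left₀ (abs_nonneg t) this n
    calc ‖Complex.I * ∫ t in (0:ℝ)..y,
          (Complex.exp (Complex.I * t) - ∑ r ∈ Finset.range n, (Complex.I * t) ^ r / r.factorial)‖
        = ‖∫ t in (0:ℝ)..y,
          (Complex.exp (Complex.I * t) - ∑ r ∈ Finset.range n, (Complex.I * t) ^ r / r.factorial)‖ := by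
          rw [norm_mul]; simp
      _ ≤ |y| ^ n * |y - 0| := intervalIntegral.norm_integral_le_of_norm_le_const hb
      _ = |y| ^ (n+1) := by rw [sub_zero, pow_succ]

lemma Pa_exp_bound (a : ℕ → ℝ) (l K : ℕ)
    (hfilt : ∀ r < K, ∑ k ∈ Finset.range (l + 1), a k * (k : ℝ) ^ r = 0) (w : ℝ) :
    ‖Pa a l (Complex.exp (-Complex.I * w))‖
      ≤ (∑ k ∈ Finset.range (l+1), |a k| * (k:ℝ)^K) * |w| ^ K := by
  have h0 : ∀ k : ℕ, (Complex.exp (-Complex.I * w)) ^ k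
      = Complex.exp (Complex.I * ((-((k:ℝ) * w) : ℝ) : ℂ)) := by
    intro k
    rw [← Complex.exp_nat_mul]
    push_cast
    ring_nf
  have hz : ∑ k ∈ Finset.range (l+1), (a k : ℂ) *
      (∑ r ∈ Finset.range K, (Complex.I * ((-((k:ℝ)*w):ℝ):ℂ)) ^ r / r.factorial) = 0 := by
    simp_rw [Finset.mul_sum]
    rw [Finset.sum_comm]
    refine Finset.sum_eq_zero (fun r hr => ?_)
    have hc : ∀ k ∈ Finset.range (l+1),
        (a k : ℂ) * ((Complex.I * ((-((k:ℝ)*w):ℝ):ℂ)) ^ r / r.factorial)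
          = ((Complex.I * (-(w:ℂ))) ^ r / r.factorial) * ((a k : ℂ) * (k:ℂ) ^ r) := by
      intro k _
      push_cast
      ring
    rw [Finset.sum_congr rfl hc, ← Finset.mul_sum]
    have hs : ∑ k ∈ Finset.range (l+1), (a k : ℂ) * (k:ℂ) ^ r
        = ((∑ k ∈ Finset.range (l+1), a k * (k:ℝ) ^ r : ℝ) : ℂ) := by
      push_cast
      rfl
    rw [hs, hfilt r (Finset.mem_range.mp hr)]
    simp
  have hPa : Pa a l (Complex.exp (-Complex.I * w))
      = ∑ k ∈ Finset.range (l+1), (a k : ℂ) *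
          (Complex.exp (Complex.I * ((-((k:ℝ)*w):ℝ):ℂ))
            - ∑ r ∈ Finset.range K, (Complex.I * ((-((k:ℝ)*w):ℝ):ℂ)) ^ r / r.factorial) := by
    simp_rw [mul_sub]
    rw [Finset.sum_sub_distrib, hz, sub_zero]
    unfold Pa
    simp_rw [h0]
  rw [hPa]
  refine le_trans (norm_sum_le _ _) ?_
  rw [Finset.sum_mul]
  refine Finset.sum_le_sum (fun k _ => ?_)
  rw [norm_mul, Complex.norm_real, Real.norm_eq_abs]
  calc |a k| * ‖_‖ ≤ |a k| * |(-((k:ℝ)*w))| ^ K :=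
        mul_le_mul_of_nonneg_left (exp_taylor_bound K (-((k:ℝ)*w))) (abs_nonneg _)
    _ = |a k| * (k:ℝ) ^ K * |w| ^ K := by
        rw [abs_neg, abs_mul, Nat.abs_cast, mul_pow]; ring

lemma integrableOn_Iio_of_even' {g : ℝ → ℝ} (hg : ∀ x, g (-x) = g x)
    (h : IntegrableOn g (Set.Ioi (0:ℝ))) : IntegrableOn g (Set.Iio (0:ℝ)) := by
  rw [← (Measure.measurePreserving_neg (volume : Measure ℝ)).integrableOn_comp_preimage
      (Homeomorph.neg ℝ).measurableEmbedding]
  simp only [Function.comp_def, Set.neg_preimage, Set.neg_Iio, neg_zero]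
  simpa only [hg] using h

lemma integrable_min_rpow (α β : ℝ) (hα : 0 < α) (hab : -1 < α + β) (hβ : β < -1) :
    Integrable (fun x : ℝ => min 1 (|x| ^ α) * |x| ^ β) := by
  have hmeas : Measurable fun x : ℝ => min 1 (|x| ^ α) * |x| ^ β := by fun_prop
  have hnn : ∀ x : ℝ, 0 ≤ min 1 (|x| ^ α) * |x| ^ β := fun x =>
    mul_nonneg (le_min zero_le_one (Real.rpow_nonneg (abs_nonneg x) α))
      (Real.rpow_nonneg (abs_nonneg x) β)
  have hIoi : IntegrableOn (fun x : ℝ => min 1 (|x| ^ α) * |x| ^ β) (Set.Ioi (0:ℝ)) := by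
    rw [← Set.Ioc_union_Ioi_eq_Ioi (zero_le_one)]
    rw [integrableOn_union]
    constructor
    · have hbase : IntegrableOn (fun x : ℝ => x ^ (α + β)) (Set.Ioc (0:ℝ) 1) := by
        have := intervalIntegral.intervalIntegrable_rpow' (a := 0) (b := 1) hab
        rwa [intervalIntegrable_iff, Set.uIoc_of_le zero_le_one] at this
      refine Integrable.mono' hbase hmeas.aestronglyMeasurable ?_
      refine (ae_restrict_iff' measurableSet_Ioc).mpr (ae_of_all _ fun x hx => ?_)
      rw [Real.norm_eq_abs, _root_.abs_of_nonneg (hnn x)]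
      have hx0 : 0 < x := hx.1
      rw [abs_of_pos hx0, Real.rpow_add hx0]
      exact mul_le_mul_of_nonneg_right (min_le_right _ _) (Real.rpow_nonneg hx0.le β)
    · have hbase : IntegrableOn (fun x : ℝ => x ^ β) (Set.Ioi (1:ℝ)) :=
        (integrableOn_Ioi_rpow_iff zero_lt_one).mpr hβ
      refine Integrable.mono' hbase hmeas.aestronglyMeasurable ?_
      refine (ae_restrict_iff' measurableSet_Ioi).mpr (ae_of_all _ fun x hx => ?_)
      rw [Real.norm_eq_abs, _root_.abs_of_nonneg (hnn x)]
      have hx0 : (0:ℝ) < x := lt_trans zero_lt_one hx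
      rw [abs_of_pos hx0]
      calc min 1 (x ^ α) * x ^ β ≤ 1 * x ^ β :=
            mul_le_mul_of_nonneg_right (min_le_left _ _) (Real.rpow_nonneg hx0.le β)
        _ = x ^ β := one_mul _
  rw [← integrableOn_univ, ← @Set.Iio_union_Ici _ _ (0 : ℝ), integrableOn_union,
    integrableOn_Ici_iff_integrableOn_Ioi]
  exact ⟨integrableOn_Iio_of_even' (fun x => by rw [abs_neg]) hIoi, hIoi⟩

theorem statement6 (f : ℝ → ℝ) (H c s : ℝ) (hf : SpecHyp f H c s)
    (a : ℕ → ℝ) (l K : ℕ) (ha : IsFilter a l K) (hKH : H < (K : ℝ))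
    (u v : ℕ) (hu : 1 ≤ u) (hv : 1 ≤ v) (p : ℤ) :
    Tendsto (fun N : ℕ => (N : ℝ) ^ (2 * H) * Gam f a l u v N p) atTop
      (nhds (c * Iuv a l u v H p)) := by
  obtain ⟨hK1, hKl, hfilt, -⟩ := ha
  obtain ⟨C₀, hC₀, A₀, hA₀, hbnd₀⟩ := hf.bound
  have hH := hf.Hpos
  have hcpos := hf.cpos
  have hKH' : (0:ℝ) < (K:ℝ) - H := by linarith
  have hK1' : (1:ℝ) ≤ (K:ℝ) := by exact_mod_cast hK1
  set s' : ℝ := min s ((K:ℝ) - H) with hs'def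
  have hs' : 0 < s' := lt_min hf.spos hKH'
  have hs'le : s' ≤ (K:ℝ) - H := min_le_right _ _
  set A : ℝ := max A₀ 1 with hAdef
  have hA1 : (1:ℝ) ≤ A := le_max_right _ _
  have hA0 : (0:ℝ) < A := lt_of_lt_of_le one_pos hA1
  have hbnd : ∀ ξ : ℝ, A ≤ |ξ| → |f ξ - c * |ξ| ^ (-2*H-1)| ≤ C₀ * |ξ| ^ (-2*H-1-s') := by
    intro ξ hξ
    refine (hbnd₀ ξ (le_trans (le_max_left _ _) hξ)).trans ?_
    have h1 : (1:ℝ) ≤ |ξ| := le_trans hA1 hξ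
    refine mul_le_mul_of_nonneg_left (Real.rpow_le_rpow_of_exponent_le h1 ?_) hC₀.le
    have : s' ≤ s := min_le_left _ _
    linarith
  -- constants controlling `haUV`
  set Ca : ℝ := ∑ k ∈ Finset.range (l+1), |a k| * (k:ℝ)^K with hCadef
  set Ba : ℝ := ∑ k ∈ Finset.range (l+1), |a k| with hBadef
  have hCa0 : 0 ≤ Ca := Finset.sum_nonneg fun k _ =>
    mul_nonneg (abs_nonneg _) (pow_nonneg (Nat.cast_nonneg k) _)
  have hBa0 : 0 ≤ Ba := Finset.sum_nonneg fun k _ => abs_nonneg _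
  have hPaB : ∀ w : ℝ, ‖Pa a l (Complex.exp (-Complex.I * w))‖ ≤ Ba := by
    intro w
    refine le_trans (norm_sum_le _ _) (Finset.sum_le_sum fun k _ => ?_)
    rw [norm_mul, Complex.norm_real, Real.norm_eq_abs]
    have h1 : ‖Complex.exp (-Complex.I * w) ^ k‖ = 1 := by
      rw [norm_pow, Complex.norm_exp]
      have : (-Complex.I * (w:ℂ)).re = 0 := by simp
      rw [this, Real.exp_zero, one_pow]
    rw [h1, mul_one]
  set tK : ℝ := 2*(K:ℝ) with htKdef
  have htK2 : (2:ℝ) ≤ tK := by rw [htKdef]; linarith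
  have htKpos : (0:ℝ) < tK := by linarith
  set Ch : ℝ := (Ca * (u:ℝ)^K) * (Ca * (v:ℝ)^K) with hChdef
  have hCh0 : 0 ≤ Ch :=
    mul_nonneg (mul_nonneg hCa0 (by positivity)) (mul_nonneg hCa0 (by positivity))
  set Mh : ℝ := max (Ba * Ba) Ch with hMhdef
  have hMh0 : 0 ≤ Mh := le_trans (mul_nonneg hBa0 hBa0) (le_max_left _ _)
  have harg : ∀ (w : ℕ) (ξ : ℝ), (-Complex.I * (w:ℂ) * (ξ:ℂ)) = -Complex.I * (((w:ℝ)*ξ :ℝ):ℂ) := by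
    intro w ξ; push_cast; ring
  have hnormUV : ∀ ξ : ℝ, ‖haUV a l u v ξ‖
      = ‖Pa a l (Complex.exp (-Complex.I * (((u:ℝ)*ξ:ℝ):ℂ)))‖
        * ‖Pa a l (Complex.exp (-Complex.I * (((v:ℝ)*ξ:ℝ):ℂ)))‖ := by
    intro ξ
    rw [haUV, harg u ξ, harg v ξ, norm_mul, RCLike.norm_conj]
  have hhbB : ∀ ξ : ℝ, ‖haUV a l u v ξ‖ ≤ Ba * Ba := by
    intro ξ
    rw [hnormUV ξ]
    exact mul_le_mul (hPaB _) (hPaB _) (norm_nonneg _) hBa0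
  have hhbC : ∀ ξ : ℝ, ‖haUV a l u v ξ‖ ≤ Ch * |ξ| ^ tK := by
    intro ξ
    rw [hnormUV ξ]
    have h1 := Pa_exp_bound a l K hfilt ((u:ℝ)*ξ)
    have h2 := Pa_exp_bound a l K hfilt ((v:ℝ)*ξ)
    refine le_trans (mul_le_mul h1 h2 (norm_nonneg _)
      (mul_nonneg hCa0 (pow_nonneg (abs_nonneg _) K))) (le_of_eq ?_)
    rw [abs_mul, abs_mul, Nat.abs_cast, Nat.abs_cast, mul_pow, mul_pow]
    have h3 : |ξ| ^ tK = |ξ|^K * |ξ|^K := by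
      rw [htKdef, show (2*(K:ℝ)) = (K:ℝ) + (K:ℝ) by ring,
        Real.rpow_add' (abs_nonneg ξ) (by positivity), Real.rpow_natCast]
    rw [h3, hChdef, hCadef]; ring
  have hhb : ∀ ξ : ℝ, ‖haUV a l u v ξ‖ ≤ Mh * min 1 (|ξ| ^ tK) := by
    intro ξ
    rcases le_total (|ξ| ^ tK) 1 with h | h
    · rw [min_eq_right h]
      exact le_trans (hhbC ξ) (mul_le_mul_of_nonneg_right (le_max_right _ _)
        (Real.rpow_nonneg (abs_nonneg _) _))
    · rw [min_eq_left h, mul_one]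
      exact le_trans (hhbB ξ) (le_max_left _ _)
  -- the sets and rescaled functions
  set T : ℕ → Set ℝ := fun N => {η : ℝ | |η| ≤ A / N} with hTdef
  have hTm : ∀ N, MeasurableSet (T N) := fun N =>
    (isClosed_le _root_.continuous_abs continuous_const).measurableSet
  set F : ℕ → ℝ → ℂ := fun N η => Complex.exp (-Complex.I * p * η) * haUV a l u v η *
      (((N:ℝ) ^ (2*H+1) * f ((N:ℝ)*η) : ℝ) : ℂ) with hFdef
  have hexp1 : ∀ η : ℝ, ‖Complex.exp (-Complex.I * (p:ℂ) * (η:ℂ))‖ = 1 := by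
    intro η
    rw [Complex.norm_exp]
    have : (-Complex.I * (p:ℂ) * (η:ℂ)).re = 0 := by simp
    rw [this, Real.exp_zero]
  have hFnorm : ∀ (N : ℕ) (η : ℝ),
      ‖F N η‖ = ‖haUV a l u v η‖ * ((N:ℝ)^(2*H+1) * f ((N:ℝ)*η)) := by
    intro N η
    rw [hFdef]
    simp only
    rw [norm_mul, norm_mul, hexp1 η, one_mul, Complex.norm_real, Real.norm_eq_abs,
      _root_.abs_of_nonneg (mul_nonneg (Real.rpow_nonneg (Nat.cast_nonneg N) _) (hf.nonneg _))]
  have hUVcont : Continuous (haUV a l u v) := by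
    have h1 : Continuous fun ξ : ℝ => Pa a l (Complex.exp (-Complex.I * u * ξ)) := by
      unfold Pa; fun_prop
    have h2 : Continuous fun ξ : ℝ => Pa a l (Complex.exp (-Complex.I * v * ξ)) := by
      unfold Pa; fun_prop
    exact h1.mul (Complex.continuous_conj.comp h2)
  have hFmeas : ∀ N, AEStronglyMeasurable (F N) (volume : Measure ℝ) := by
    intro N
    apply Measurable.aestronglyMeasurable
    refine Measurable.mul (Measurable.mul ?_ hUVcont.measurable) ?_
    · exact Continuous.measurable (by fun_prop)
    · exact Complex.measurable_ofReal.comp ((hf.meas.comp (measurable_const_mul _)).const_mul _)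
  have hmint : ∀ N : ℕ, 1 ≤ N → Integrable (fun η : ℝ => min 1 (((N:ℝ)*η)^2) * f ((N:ℝ)*η)) := by
    intro N hN
    exact hf.integrable.comp_mul_left' (Nat.cast_ne_zero.mpr (by omega))
  set M : ℝ := ∫ ξ : ℝ, min 1 (ξ^2) * f ξ with hMdef
  have hM0 : 0 ≤ M := integral_nonneg fun ξ =>
    mul_nonneg (le_min zero_le_one (sq_nonneg _)) (hf.nonneg _)
  have hmval : ∀ N : ℕ, 1 ≤ N →
      (∫ η : ℝ, min 1 (((N:ℝ)*η)^2) * f ((N:ℝ)*η)) = (N:ℝ)⁻¹ * M := by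
    intro N hN
    have hNR : (0:ℝ) < N := by exact_mod_cast hN
    have := MeasureTheory.Measure.integral_comp_mul_left (fun ξ : ℝ => min 1 (ξ^2) * f ξ) (N:ℝ)
    rw [this, abs_of_pos (inv_pos.mpr hNR), smul_eq_mul, hMdef]
  have hminle : ∀ N : ℕ, 1 ≤ N → ∀ η : ℝ, min 1 (|η| ^ tK) ≤ min 1 (((N:ℝ)*η)^2) := by
    intro N hN η
    have hN1 : (1:ℝ) ≤ N := by exact_mod_cast hN
    rcases le_or_gt 1 (|η|) with h | h
    · have h2 : (1:ℝ) ≤ ((N:ℝ)*η)^2 := by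
        have : (1:ℝ) ≤ |(N:ℝ)*η| := by
          rw [abs_mul, Nat.abs_cast]
          calc (1:ℝ) = 1 * 1 := (one_mul 1).symm
            _ ≤ (N:ℝ) * |η| := mul_le_mul hN1 h zero_le_one (Nat.cast_nonneg N)
        calc (1:ℝ) = 1^2 := (one_pow 2).symm
          _ ≤ |(N:ℝ)*η|^2 := pow_le_pow_left₀ zero_le_one this 2
          _ = ((N:ℝ)*η)^2 := sq_abs _
      rw [min_eq_left h2]
      exact min_le_left _ _
    · refine le_min (min_le_left _ _) ?_
      rcases eq_or_ne η 0 with rfl | hη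
      · rw [abs_zero, Real.zero_rpow (ne_of_gt htKpos)]
        exact le_trans (min_le_right _ _) (by positivity)
      · have hpos : 0 < |η| := abs_pos.mpr hη
        calc min 1 (|η| ^ tK) ≤ |η| ^ tK := min_le_right _ _
          _ ≤ |η| ^ (2:ℝ) := Real.rpow_le_rpow_of_exponent_ge hpos h.le htK2
          _ = η^2 := by
              rw [show (2:ℝ) = ((2:ℕ):ℝ) by norm_num, Real.rpow_natCast, _root_.sq_abs]
          _ ≤ ((N:ℝ)*η)^2 := by
              rw [mul_pow]
              calc η^2 = 1 * η^2 := (one_mul _).symm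
                _ ≤ (N:ℝ)^2 * η^2 := by
                    refine mul_le_mul_of_nonneg_right ?_ (sq_nonneg η)
                    calc (1:ℝ) = 1^2 := (one_pow 2).symm
                      _ ≤ (N:ℝ)^2 := pow_le_pow_left₀ zero_le_one hN1 2
  have hFint : ∀ N : ℕ, 1 ≤ N → Integrable (F N) := by
    intro N hN
    refine Integrable.mono' (((hmint N hN).const_mul ((N:ℝ)^(2*H+1))).const_mul Mh)
      (hFmeas N) (ae_of_all _ fun η => ?_)
    rw [hFnorm N η]
    calc ‖haUV a l u v η‖ * ((N:ℝ)^(2*H+1) * f ((N:ℝ)*η))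
        ≤ (Mh * min 1 (|η| ^ tK)) * ((N:ℝ)^(2*H+1) * f ((N:ℝ)*η)) :=
          mul_le_mul_of_nonneg_right (hhb η)
            (mul_nonneg (Real.rpow_nonneg (Nat.cast_nonneg N) _) (hf.nonneg _))
      _ = Mh * ((N:ℝ)^(2*H+1) * (min 1 (|η| ^ tK) * f ((N:ℝ)*η))) := by ring
      _ ≤ Mh * ((N:ℝ)^(2*H+1) * (min 1 (((N:ℝ)*η)^2) * f ((N:ℝ)*η))) := by
          refine mul_le_mul_of_nonneg_left (mul_le_mul_of_nonneg_left
            (mul_le_mul_of_nonneg_right (hminle N hN η) (hf.nonneg _))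
            (Real.rpow_nonneg (Nat.cast_nonneg N) _)) hMh0
  -- useful scaling identities
  have he1 : ∀ (N : ℕ), 0 < (N:ℝ) → ∀ η : ℝ,
      (N:ℝ)^(2*H+1) * |(N:ℝ)*η| ^ (-2*H-1) = |η| ^ (-2*H-1) := by
    intro N hNR η
    rw [abs_mul, Nat.abs_cast, Real.mul_rpow (Nat.cast_nonneg N) (abs_nonneg η), ← mul_assoc,
      ← Real.rpow_add hNR]
    norm_num
  have he2 : ∀ (N : ℕ), 0 < (N:ℝ) → ∀ η : ℝ,
      (N:ℝ)^(2*H+1) * |(N:ℝ)*η| ^ (-2*H-1-s') = (N:ℝ)^(-s') * |η| ^ (-2*H-1-s') := by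
    intro N hNR η
    rw [abs_mul, Nat.abs_cast, Real.mul_rpow (Nat.cast_nonneg N) (abs_nonneg η), ← mul_assoc,
      ← Real.rpow_add hNR]
    ring_nf
  have hmemA : ∀ (N : ℕ) (η : ℝ), 0 < (N:ℝ) → A / (N:ℝ) < |η| → A ≤ |(N:ℝ)*η| := by
    intro N η hNR hlt
    rw [abs_mul, Nat.abs_cast]
    exact le_of_lt ((div_lt_iff₀' hNR).mp hlt)
  -- the limiting function and dominating function
  set flim : ℝ → ℂ := fun η => Complex.exp (-Complex.I * p * η) * haUV a l u v η *
      ((c * |η| ^ (-2*H-1) : ℝ) : ℂ) with hflimdef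
  set D : ℝ → ℝ := fun η => Mh*c*(min 1 (|η| ^ tK) * |η| ^ (-2*H-1))
      + Mh*C₀*(min 1 (|η| ^ tK) * |η| ^ (-2*H-1-s')) with hDdef
  have hDint : Integrable D := by
    refine Integrable.add ?_ ?_
    · exact (integrable_min_rpow tK (-2*H-1) htKpos (by rw [htKdef]; linarith)
        (by linarith)).const_mul (Mh*c)
    · exact (integrable_min_rpow tK (-2*H-1-s') htKpos (by rw [htKdef]; linarith)
        (by linarith)).const_mul (Mh*C₀)
  have hminnn : ∀ η : ℝ, 0 ≤ min 1 (|η| ^ tK) := fun η =>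
    le_min zero_le_one (Real.rpow_nonneg (abs_nonneg η) _)
  have hDnn : ∀ η : ℝ, 0 ≤ D η := by
    intro η
    refine add_nonneg (mul_nonneg (mul_nonneg hMh0 hcpos.le) ?_)
      (mul_nonneg (mul_nonneg hMh0 hC₀.le) ?_)
    · exact mul_nonneg (hminnn η) (Real.rpow_nonneg (abs_nonneg η) _)
    · exact mul_nonneg (hminnn η) (Real.rpow_nonneg (abs_nonneg η) _)
  -- the bound for the dominated convergence theorem
  have hbound : ∀ (N : ℕ) (η : ℝ), η ∈ (T N)ᶜ → ‖F N η‖ ≤ D η := by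
    intro N η hη
    rcases Nat.eq_zero_or_pos N with rfl | hN
    · rw [hFnorm 0 η]
      simp only [Nat.cast_zero]
      rw [Real.zero_rpow (by linarith : 2*H+1 ≠ 0), zero_mul, mul_zero]
      exact hDnn η
    · have hN1 : (1:ℝ) ≤ N := by exact_mod_cast hN
      have hNR : (0:ℝ) < N := by linarith
      have hlt : A / (N:ℝ) < |η| := by
        have : ¬ (|η| ≤ A / N) := hη
        linarith [not_le.mp this]
      have hA' : A ≤ |(N:ℝ)*η| := hmemA N η hNR hlt
      have hfb := hbnd ((N:ℝ)*η) hA'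
      have hfle : f ((N:ℝ)*η) ≤ c * |(N:ℝ)*η| ^ (-2*H-1) + C₀ * |(N:ℝ)*η| ^ (-2*H-1-s') := by
        have h2 := (abs_le.mp hfb).2
        linarith
      rw [hFnorm N η]
      have hXnn : 0 ≤ (N:ℝ)^(2*H+1) := Real.rpow_nonneg (Nat.cast_nonneg N) _
      calc ‖haUV a l u v η‖ * ((N:ℝ)^(2*H+1) * f ((N:ℝ)*η))
          ≤ (Mh * min 1 (|η| ^ tK)) * ((N:ℝ)^(2*H+1)
              * (c * |(N:ℝ)*η| ^ (-2*H-1) + C₀ * |(N:ℝ)*η| ^ (-2*H-1-s'))) := by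
            refine mul_le_mul (hhb η) (mul_le_mul_of_nonneg_left hfle hXnn)
              (mul_nonneg hXnn (hf.nonneg _)) (mul_nonneg hMh0 (hminnn η))
        _ = (Mh * min 1 (|η| ^ tK)) * (c * ((N:ℝ)^(2*H+1) * |(N:ℝ)*η| ^ (-2*H-1))
              + C₀ * ((N:ℝ)^(2*H+1) * |(N:ℝ)*η| ^ (-2*H-1-s'))) := by ring
        _ ≤ (Mh * min 1 (|η| ^ tK)) * (c * |η| ^ (-2*H-1) + C₀ * |η| ^ (-2*H-1-s')) := by
            refine mul_le_mul_of_nonneg_left (add_le_add ?_ ?_) (mul_nonneg hMh0 (hminnn η))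
            · rw [he1 N hNR η]
            · rw [he2 N hNR η]
              refine mul_le_mul_of_nonneg_left ?_ hC₀.le
              calc (N:ℝ)^(-s') * |η| ^ (-2*H-1-s') ≤ 1 * |η| ^ (-2*H-1-s') := by
                    refine mul_le_mul_of_nonneg_right
                      (Real.rpow_le_one_of_one_le_of_nonpos hN1 (by linarith))
                      (Real.rpow_nonneg (abs_nonneg η) _)
                _ = |η| ^ (-2*H-1-s') := one_mul _
        _ = D η := by rw [hDdef]; ring
  have hae0 : ∀ᵐ η : ℝ, η ≠ 0 := by
    rw [ae_iff]
    have : {η : ℝ | ¬ η ≠ 0} = {0} := by ext x; simp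
    rw [this]
    exact measure_singleton 0
  -- pointwise convergence
  have hlim : ∀ᵐ η : ℝ, Tendsto (fun N : ℕ => ((T N)ᶜ).indicator (F N) η) atTop (nhds (flim η)) := by
    filter_upwards [hae0] with η hη
    have hpos : 0 < |η| := abs_pos.mpr hη
    have hev : ∀ᶠ N : ℕ in atTop, ((T N)ᶜ).indicator (F N) η = F N η := by
      filter_upwards [(tendsto_const_div_atTop_nhds_zero_nat A).eventually_lt_const hpos]
        with N hN2
      refine Set.indicator_of_mem ?_ (F N)
      simp only [hTdef, Set.mem_compl_iff, Set.mem_setOf_eq, not_le]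
      exact hN2
    have hr : Tendsto (fun N : ℕ => (N:ℝ)^(2*H+1) * f ((N:ℝ)*η)) atTop
        (nhds (c * |η| ^ (-2*H-1))) := by
      rw [← tendsto_sub_nhds_zero_iff]
      have hbseq : Tendsto (fun N : ℕ => C₀ * |η|^(-2*H-1-s') * (N:ℝ)^(-s')) atTop (nhds 0) := by
        have h2 := (tendsto_rpow_neg_atTop hs').comp
          (tendsto_natCast_atTop_atTop (R := ℝ))
        have := h2.const_mul (C₀ * |η|^(-2*H-1-s'))
        simpa using this
      refine squeeze_zero_norm' ?_ hbseq
      filter_upwards [(tendsto_const_div_atTop_nhds_zero_nat A).eventually_lt_const hpos,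
        eventually_ge_atTop 1] with N hN2 hN1
      have hNR : (0:ℝ) < N := by
        have : (1:ℝ) ≤ N := by exact_mod_cast hN1
        linarith
      have hA' : A ≤ |(N:ℝ)*η| := hmemA N η hNR hN2
      have hfb := hbnd ((N:ℝ)*η) hA'
      have hre : (N:ℝ)^(2*H+1) * f ((N:ℝ)*η) - c * |η| ^ (-2*H-1)
          = (N:ℝ)^(2*H+1) * (f ((N:ℝ)*η) - c * |(N:ℝ)*η| ^ (-2*H-1)) := by
        rw [mul_sub, ← mul_assoc, mul_comm ((N:ℝ)^(2*H+1)) c, mul_assoc, he1 N hNR η]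
      rw [Real.norm_eq_abs, hre, abs_mul,
        _root_.abs_of_nonneg (Real.rpow_nonneg (Nat.cast_nonneg N) _)]
      calc (N:ℝ)^(2*H+1) * |f ((N:ℝ)*η) - c * |(N:ℝ)*η| ^ (-2*H-1)|
          ≤ (N:ℝ)^(2*H+1) * (C₀ * |(N:ℝ)*η| ^ (-2*H-1-s')) :=
            mul_le_mul_of_nonneg_left hfb (Real.rpow_nonneg (Nat.cast_nonneg N) _)
        _ = C₀ * ((N:ℝ)^(2*H+1) * |(N:ℝ)*η| ^ (-2*H-1-s')) := by ring
        _ = C₀ * |η|^(-2*H-1-s') * (N:ℝ)^(-s') := by rw [he2 N hNR η]; ring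
    have hmain : Tendsto (fun N : ℕ => F N η) atTop (nhds (flim η)) := by
      have hcast := (Complex.continuous_ofReal.tendsto (c * |η| ^ (-2*H-1))).comp hr
      have := hcast.const_mul (Complex.exp (-Complex.I * p * η) * haUV a l u v η)
      simpa [hFdef, hflimdef, mul_assoc] using this
    exact Tendsto.congr' (hev.mono fun N h => h.symm) hmain
  -- convergence of the main part
  have hC' : Tendsto (fun N : ℕ => ∫ η in (T N)ᶜ, F N η) atTop (nhds (∫ η, flim η)) := by
    have hDCT := tendsto_integral_of_dominated_convergence (μ := (volume : Measure ℝ))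
      (F := fun N => ((T N)ᶜ).indicator (F N)) (f := flim) (bound := D)
      (fun N => (hFmeas N).indicator (hTm N).compl) hDint
      (fun N => ae_of_all _ fun η => ?_) hlim
    · exact hDCT.congr fun N => integral_indicator (hTm N).compl
    · show ‖((T N)ᶜ.indicator (F N)) η‖ ≤ D η
      rw [Set.indicator_apply]
      split_ifs with h
      · exact hbound N η h
      · simpa using hDnn η
  -- the remainder part tends to zero
  set CC : ℝ := Ch * A^(tK-2) * max 1 (A^2) with hCCdef
  have hCC0 : 0 ≤ CC := by positivity
  have hD' : Tendsto (fun N : ℕ => ∫ η in T N, F N η) atTop (nhds (0:ℂ)) := by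
    rw [tendsto_zero_iff_norm_tendsto_zero]
    have hg : Tendsto (fun N : ℕ => CC * M * (N:ℝ)^(2*H-tK)) atTop (nhds 0) := by
      have h2 := (tendsto_rpow_neg_atTop (by linarith : (0:ℝ) < tK - 2*H)).comp
        (tendsto_natCast_atTop_atTop (R := ℝ))
      have h3 := h2.const_mul (CC * M)
      simp only [mul_zero] at h3
      refine h3.congr fun N => ?_
      simp only [Function.comp_apply]
      rw [show -(tK - 2*H) = 2*H - tK by ring]
    refine squeeze_zero_norm' ?_ hg
    filter_upwards [eventually_ge_atTop 1] with N hN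
    have hN1 : (1:ℝ) ≤ N := by exact_mod_cast hN
    have hNR : (0:ℝ) < N := by linarith
    rw [norm_norm]
    have hstep : ∀ η : ℝ, η ∈ T N → η ≠ 0 →
        ‖F N η‖ ≤ CC * (N:ℝ)^(2*H+1-tK) * (min 1 (((N:ℝ)*η)^2) * f ((N:ℝ)*η)) := by
      intro η hmem hη
      have hpos : 0 < |η| := abs_pos.mpr hη
      have hle : |η| ≤ A / N := hmem
      have hsq : η^2 ≤ max 1 (A^2) * (min 1 (((N:ℝ)*η)^2) * (N:ℝ)^(-(2:ℝ))) := by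
        have hNrp : (N:ℝ)^(-(2:ℝ)) = ((N:ℝ)^2)⁻¹ := by
          rw [Real.rpow_neg (Nat.cast_nonneg N), show ((2:ℝ)) = ((2:ℕ):ℝ) by norm_num,
            Real.rpow_natCast]
        rcases le_total (((N:ℝ)*η)^2) 1 with h | h
        · rw [min_eq_right h, hNrp, mul_pow]
          have : (N:ℝ)^2*η^2 * ((N:ℝ)^2)⁻¹ = η^2 := by
            field_simp
          rw [this]
          exact le_mul_of_one_le_left (sq_nonneg η) (le_max_left _ _)
        · rw [min_eq_left h, hNrp, one_mul]
          have h1 : η^2 ≤ (A/N)^2 := by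
            rw [← _root_.sq_abs η]
            exact pow_le_pow_left₀ (abs_nonneg η) hle 2
          calc η^2 ≤ (A/N)^2 := h1
            _ = A^2 * ((N:ℝ)^2)⁻¹ := by rw [div_pow]; ring
            _ ≤ max 1 (A^2) * ((N:ℝ)^2)⁻¹ :=
                mul_le_mul_of_nonneg_right (le_max_right _ _) (by positivity)
      have htheta : |η| ^ tK ≤ A^(tK-2) * (N:ℝ)^(-(tK-2)) *
          (max 1 (A^2) * (min 1 (((N:ℝ)*η)^2) * (N:ℝ)^(-(2:ℝ)))) := by
        have hsplit : |η| ^ tK = |η| ^ (tK-2) * |η| ^ (2:ℝ) := by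
          rw [← Real.rpow_add hpos]; ring_nf
        have h1 : |η| ^ (tK-2) ≤ (A / N)^(tK-2) :=
          Real.rpow_le_rpow (abs_nonneg η) hle (by linarith)
        have h2 : (A / (N:ℝ))^(tK-2) = A^(tK-2) * (N:ℝ)^(-(tK-2)) := by
          rw [Real.div_rpow hA0.le (Nat.cast_nonneg N), div_eq_mul_inv,
            ← Real.rpow_neg (Nat.cast_nonneg N)]
        have h3 : |η| ^ (2:ℝ) = η^2 := by
          rw [show (2:ℝ) = ((2:ℕ):ℝ) by norm_num, Real.rpow_natCast, _root_.sq_abs]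
        rw [hsplit, h3]
        calc |η| ^ (tK-2) * η^2 ≤ (A/N)^(tK-2) * (max 1 (A^2) * (min 1 (((N:ℝ)*η)^2)
              * (N:ℝ)^(-(2:ℝ)))) := by
              refine mul_le_mul h1 hsq (sq_nonneg η) (Real.rpow_nonneg (by positivity) _)
          _ = A^(tK-2) * (N:ℝ)^(-(tK-2)) * (max 1 (A^2) * (min 1 (((N:ℝ)*η)^2)
              * (N:ℝ)^(-(2:ℝ)))) := by rw [h2]
      have hhC : ‖haUV a l u v η‖ ≤ CC * min 1 (((N:ℝ)*η)^2) * (N:ℝ)^(-tK) := by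
        calc ‖haUV a l u v η‖ ≤ Ch * |η| ^ tK := hhbC η
          _ ≤ Ch * (A^(tK-2) * (N:ℝ)^(-(tK-2)) * (max 1 (A^2) * (min 1 (((N:ℝ)*η)^2)
              * (N:ℝ)^(-(2:ℝ))))) := mul_le_mul_of_nonneg_left htheta hCh0
          _ = CC * min 1 (((N:ℝ)*η)^2) * ((N:ℝ)^(-(tK-2)) * (N:ℝ)^(-(2:ℝ))) := by
              rw [hCCdef]; ring
          _ = CC * min 1 (((N:ℝ)*η)^2) * (N:ℝ)^(-tK) := by
              rw [← Real.rpow_add hNR]; ring_nf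
      rw [hFnorm N η]
      calc ‖haUV a l u v η‖ * ((N:ℝ)^(2*H+1) * f ((N:ℝ)*η))
          ≤ (CC * min 1 (((N:ℝ)*η)^2) * (N:ℝ)^(-tK)) * ((N:ℝ)^(2*H+1) * f ((N:ℝ)*η)) := by
            refine mul_le_mul_of_nonneg_right hhC
              (mul_nonneg (Real.rpow_nonneg (Nat.cast_nonneg N) _) (hf.nonneg _))
        _ = CC * ((N:ℝ)^(-tK) * (N:ℝ)^(2*H+1)) * (min 1 (((N:ℝ)*η)^2) * f ((N:ℝ)*η)) := by
            ring
        _ = CC * (N:ℝ)^(2*H+1-tK) * (min 1 (((N:ℝ)*η)^2) * f ((N:ℝ)*η)) := by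
            rw [← Real.rpow_add hNR]; ring_nf
    have hb1 : ‖∫ η in T N, F N η‖ ≤ ∫ η in T N, ‖F N η‖ := norm_integral_le_integral_norm _
    have hbint : Integrable (fun η : ℝ => CC * (N:ℝ)^(2*H+1-tK)
        * (min 1 (((N:ℝ)*η)^2) * f ((N:ℝ)*η))) := (hmint N hN).const_mul _
    have hb2 : (∫ η in T N, ‖F N η‖) ≤ ∫ η in T N, CC * (N:ℝ)^(2*H+1-tK)
        * (min 1 (((N:ℝ)*η)^2) * f ((N:ℝ)*η)) := by
      refine setIntegral_mono_on_ae ((hFint N hN).norm.integrableOn)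
        (hbint.integrableOn) (hTm N) ?_
      filter_upwards [hae0] with η hη hmem
      exact hstep η hmem hη
    have hb3 : (∫ η in T N, CC * (N:ℝ)^(2*H+1-tK) * (min 1 (((N:ℝ)*η)^2) * f ((N:ℝ)*η)))
        ≤ ∫ η : ℝ, CC * (N:ℝ)^(2*H+1-tK) * (min 1 (((N:ℝ)*η)^2) * f ((N:ℝ)*η)) := by
      refine setIntegral_le_integral hbint (ae_of_all _ fun η => ?_)
      refine mul_nonneg (mul_nonneg hCC0 (Real.rpow_nonneg (Nat.cast_nonneg N) _))
        (mul_nonneg (le_min zero_le_one (sq_nonneg _)) (hf.nonneg _))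
    have hb4 : (∫ η : ℝ, CC * (N:ℝ)^(2*H+1-tK) * (min 1 (((N:ℝ)*η)^2) * f ((N:ℝ)*η)))
        = CC * M * (N:ℝ)^(2*H-tK) := by
      rw [MeasureTheory.integral_const_mul, hmval N hN]
      rw [show ((N:ℝ))⁻¹ = (N:ℝ)^(-(1:ℝ)) by rw [Real.rpow_neg_one]]
      rw [show CC * (N:ℝ)^(2*H+1-tK) * ((N:ℝ)^(-(1:ℝ)) * M)
          = CC * M * ((N:ℝ)^(2*H+1-tK) * (N:ℝ)^(-(1:ℝ))) by ring, ← Real.rpow_add hNR]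
      ring_nf
    linarith
  -- the change of variables identity
  have heq : ∀ N : ℕ, 1 ≤ N → (N:ℝ)^(2*H) * Gam f a l u v N p
      = ((∫ η in T N, F N η) + (∫ η in (T N)ᶜ, F N η)).re := by
    intro N hN
    have hN1 : (1:ℝ) ≤ N := by exact_mod_cast hN
    have hNR : (0:ℝ) < N := by linarith
    have hNne : (N:ℝ) ≠ 0 := ne_of_gt hNR
    have hNCne : (N:ℂ) ≠ 0 := by exact_mod_cast hNne
    rw [integral_add_compl (hTm N) (hFint N hN)]
    have hGN : ∀ x : ℝ,
        (Complex.exp (-Complex.I * p * (((N:ℝ)*x : ℝ):ℂ) / (N:ℕ)) * haUV a l u v (((N:ℝ)*x) / N)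
          * (f ((N:ℝ)*x) : ℂ))
        = Complex.exp (-Complex.I * p * x) * haUV a l u v x * (f ((N:ℝ)*x) : ℂ) := by
      intro x
      have e1 : (-Complex.I * p * (((N:ℝ)*x : ℝ):ℂ) / (N:ℕ)) = -Complex.I * p * x := by
        push_cast
        field_simp
        try ring
      have e2 : ((N:ℝ)*x)/(N:ℝ) = x := by field_simp
      rw [e1, e2]
    have hcv := MeasureTheory.Measure.integral_comp_mul_left
      (fun ξ : ℝ => Complex.exp (-Complex.I * p * ξ / (N:ℕ)) * haUV a l u v (ξ / N)
        * (f ξ : ℂ)) (N:ℝ)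
    simp only [hGN] at hcv
    have hsub : (∫ ξ : ℝ, Complex.exp (-Complex.I * p * ξ / (N:ℕ)) * haUV a l u v (ξ / N)
        * (f ξ : ℂ))
        = (N:ℝ) • ∫ x : ℝ, Complex.exp (-Complex.I * p * x) * haUV a l u v x
            * (f ((N:ℝ)*x) : ℂ) := by
      rw [hcv, abs_of_pos (inv_pos.mpr hNR), smul_smul, mul_inv_cancel₀ hNne, one_smul]
    have hFsm : F N = fun x : ℝ => ((N:ℝ)^(2*H+1)) •
        (Complex.exp (-Complex.I * p * x) * haUV a l u v x * (f ((N:ℝ)*x) : ℂ)) := by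
      funext x
      rw [hFdef]
      simp only [Complex.real_smul]
      push_cast
      ring
    unfold Gam
    rw [hsub, Complex.real_smul, Complex.re_ofReal_mul, hFsm, integral_smul,
      Complex.real_smul, Complex.re_ofReal_mul,
      show (N:ℝ)^(2*H+1) = (N:ℝ)^(2*H) * N by rw [Real.rpow_add hNR, Real.rpow_one]]
    ring
  -- final value computation
  have hval : (∫ η, flim η).re = c * Iuv a l u v H p := by
    have hfl : flim = fun η : ℝ => (c:ℂ) • (Complex.exp (-Complex.I * p * η) * haUV a l u v η *
        ((|η| ^ (-2*H-1) : ℝ) : ℂ)) := by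
      funext η
      rw [hflimdef]
      simp only [smul_eq_mul]
      push_cast
      ring
    rw [hfl, integral_smul, smul_eq_mul, Complex.re_ofReal_mul]
    unfold Iuv
    norm_num
  -- putting everything together
  have hsum : Tendsto (fun N : ℕ => ((∫ η in T N, F N η) + (∫ η in (T N)ᶜ, F N η)).re) atTop
      (nhds (c * Iuv a l u v H p)) := by
    have h1 := hD'.add hC'
    rw [zero_add] at h1
    have h2 := (Complex.continuous_re.tendsto _).comp h1
    rw [show (∫ η, flim η).re = c * Iuv a l u v H p from hval] at h2
    exact h2
  refine Tendsto.congr' ?_ hsum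
  filter_upwards [eventually_ge_atTop 1] with N hN
  exact (heq N hN).symm
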